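/- For k ≥ 2 and a primitive (2k)-th root of unity ζ, the k-Catalan denominator polynomial satisfies Q_k(x_r,...,x_s) = ζ^{s−r+1} · x_r x_{r+1}···x_s · K_{k,s−r+1}(1/(ζ x_r), 1/(ζ x_{r+1}), ..., 1/(ζ x_s)). -/

import Mathlib

/-- The `k`-continuant `K_{k,n}(x_1, …, x_n)` over a field (variables zero-indexed). -/
def contK {F : Type*} [Field F] (k : ℕ) (x : ℕ → F) : ℕ → F := fun n =>
  if _h : n < k ∨ k = 0 then ∏ i ∈ Finset.range n, x i
  else contK k x (n - k) + contK k x (n - 1) * x (n - 1)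
termination_by n => n
decreasing_by all_goals omega

/-- `S` is a disjoint union of blocks of `k` consecutive integers. -/
def IsBlockUnion (k : ℕ) (S : Finset ℕ) : Prop :=
  ∃ T : Finset ℕ,
    (∀ t ∈ T, ∀ t' ∈ T, t ≠ t' → t + k ≤ t' ∨ t' + k ≤ t) ∧
    S = T.biUnion (fun t => Finset.Ico t (t + k))

open Classical in
/-- The `k`-Catalan denominator polynomial
`Q_k(x_r, …, x_s) = ∑_S (−1)^{|S|/k} ∏_{i ∈ S} x_i`, the sum over all subsets `S`
of `[r, s]` that are disjoint unions of blocks of `k` consecutive integers. -/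
noncomputable def Qnat {F : Type*} [Field F] (k r s : ℕ) (x : ℕ → F) : F :=
  ∑ S ∈ (Finset.Icc r s).powerset.filter (fun S => IsBlockUnion k S),
    (-1 : F) ^ (S.card / k) * ∏ i ∈ S, x i

lemma isBlockUnion_empty (k : ℕ) : IsBlockUnion k ∅ :=
  ⟨∅, by simp, by simp⟩

lemma contK_of_lt {F : Type*} [Field F] {k n : ℕ} (h : n < k) (y : ℕ → F) :
    contK k y n = ∏ i ∈ Finset.range n, y i := by
  rw [contK, dif_pos (Or.inl h)]

lemma contK_of_ge {F : Type*} [Field F] {k n : ℕ} (hk : 0 < k) (h : k ≤ n) (y : ℕ → F) :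
    contK k y n = contK k y (n - k) + contK k y (n - 1) * y (n - 1) := by
  rw [contK, dif_neg (by omega)]

lemma prod_cancel {F : Type*} [Field F] (ζ : F) (hζ : ζ ≠ 0) (x : ℕ → F)
    (hx : ∀ i, x i ≠ 0) (r n : ℕ) :
    ζ ^ n * (∏ i ∈ Finset.range n, x (r + i)) *
      ∏ i ∈ Finset.range n, (ζ * x (r + i))⁻¹ = 1 := by
  have h1 : ζ ^ n = ∏ _i ∈ Finset.range n, ζ := by
    rw [Finset.prod_const, Finset.card_range]
  rw [h1, ← Finset.prod_mul_distrib, ← Finset.prod_mul_distrib]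
  exact Finset.prod_eq_one fun i _ => mul_inv_cancel₀ (mul_ne_zero hζ (hx _))

open Classical in
lemma Qnat_of_lt {F : Type*} [Field F] {k r s : ℕ} (hk : 0 < k) (h : s + 1 < r + k)
    (x : ℕ → F) : Qnat k r s x = 1 := by
  unfold Qnat
  have hfil : (Finset.Icc r s).powerset.filter (fun S => IsBlockUnion k S) = {∅} := by
    ext S
    simp only [Finset.mem_filter, Finset.mem_powerset, Finset.mem_singleton]
    constructor
    · rintro ⟨hSsub, T, hT, rfl⟩
      by_contra hne
      have hTne : T.Nonempty := by
        by_contra h'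
        rw [Finset.not_nonempty_iff_eq_empty] at h'
        subst h'
        simp at hne
      obtain ⟨t, ht⟩ := hTne
      have hsub : Finset.Ico t (t + k) ⊆ Finset.Icc r s := fun i hi =>
        hSsub (Finset.mem_biUnion.mpr ⟨t, ht, hi⟩)
      have h1 := hsub (Finset.mem_Ico.mpr ⟨le_refl t, by omega⟩)
      have h2 := hsub (Finset.mem_Ico.mpr (⟨by omega, by omega⟩ :
        t ≤ t + k - 1 ∧ t + k - 1 < t + k))
      simp only [Finset.mem_Icc] at h1 h2
      omega
    · rintro rfl
      exact ⟨Finset.empty_subset _, isBlockUnion_empty k⟩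
  rw [hfil]
  simp

open Classical in
lemma Qnat_of_eq {F : Type*} [Field F] {k r s : ℕ} (hk : 2 ≤ k) (h : s + 1 = r + k)
    (x : ℕ → F) : Qnat k r s x = 1 - ∏ i ∈ Finset.Icc r s, x i := by
  unfold Qnat
  have hrs : r < s := by omega
  have hIcc : Finset.Icc r s = Finset.Ico r (r + k) := by
    rw [← h, Finset.Ico_add_one_right_eq_Icc]
  have hfil : (Finset.Icc r s).powerset.filter (fun S => IsBlockUnion k S)
      = {∅, Finset.Icc r s} := by
    ext S
    simp only [Finset.mem_filter, Finset.mem_powerset, Finset.mem_insert,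
      Finset.mem_singleton]
    constructor
    · rintro ⟨hSsub, T, hT, rfl⟩
      rcases Finset.eq_empty_or_nonempty T with rfl | ⟨t, ht⟩
      · left; simp
      · right
        have hsub : Finset.Ico t (t + k) ⊆ Finset.Icc r s := fun i hi =>
          hSsub (Finset.mem_biUnion.mpr ⟨t, ht, hi⟩)
        have hcard : (Finset.Icc r s).card ≤ (Finset.Ico t (t + k)).card := by
          rw [Nat.card_Icc, Nat.card_Ico]; omega
        have heq := Finset.eq_of_subset_of_card_le hsub hcard
        apply Finset.Subset.antisymm hSsub
        rw [← heq]
        exact fun i hi => Finset.mem_biUnion.mpr ⟨t, ht, hi⟩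
    · rintro (rfl | rfl)
      · exact ⟨Finset.empty_subset _, isBlockUnion_empty k⟩
      · refine ⟨le_refl _, ⟨{r}, by simp, ?_⟩⟩
        rw [hIcc]
        simp
  rw [hfil]
  have hne : (∅ : Finset ℕ) ≠ Finset.Icc r s := by
    intro hcon
    have : r ∈ Finset.Icc r s := Finset.mem_Icc.mpr ⟨le_refl r, by omega⟩
    rw [← hcon] at this
    simp at this
  rw [Finset.sum_pair hne]
  have hc : (Finset.Icc r s).card = k := by rw [Nat.card_Icc]; omega
  rw [hc, Nat.div_self (by omega : 0 < k)]
  simp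
  ring

lemma block_split {k r s : ℕ} (hk : 2 ≤ k) (h : r + k ≤ s) {S : Finset ℕ}
    (hS : S ⊆ Finset.Icc r s) (hB : IsBlockUnion k S) (hs : s ∈ S) :
    Finset.Icc (s + 1 - k) s ⊆ S ∧ (S \ Finset.Icc (s + 1 - k) s) ⊆ Finset.Icc r (s - k) ∧
    IsBlockUnion k (S \ Finset.Icc (s + 1 - k) s) := by
  obtain ⟨T, hT, rfl⟩ := hB
  set S := T.biUnion (fun t => Finset.Ico t (t + k)) with hSdef
  obtain ⟨t, htT, hts⟩ := Finset.mem_biUnion.mp hs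
  have hblock : ∀ t' ∈ T, Finset.Ico t' (t' + k) ⊆ Finset.Icc r s := fun t' ht' i hi =>
    hS (Finset.mem_biUnion.mpr ⟨t', ht', hi⟩)
  rw [Finset.mem_Ico] at hts
  have ht1 : t + k = s + 1 := by
    have h2 := hblock t htT (Finset.mem_Ico.mpr (⟨by omega, by omega⟩ :
      t ≤ t + k - 1 ∧ t + k - 1 < t + k))
    rw [Finset.mem_Icc] at h2
    omega
  have hBeq : Finset.Icc (s + 1 - k) s = Finset.Ico t (t + k) := by
    rw [ht1, show t = s + 1 - k by omega, Finset.Ico_add_one_right_eq_Icc]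
  have hsep : ∀ t' ∈ T, t' ≠ t → t' + k ≤ t := by
    intro t' ht' hne
    rcases hT t' ht' t htT hne with h' | h'
    · exact h'
    · exfalso
      have hmem : t' ∈ Finset.Icc r s :=
        hblock t' ht' (Finset.mem_Ico.mpr ⟨le_refl _, by omega⟩)
      rw [Finset.mem_Icc] at hmem
      omega
  have hBsub : Finset.Icc (s + 1 - k) s ⊆ S := by
    rw [hBeq]
    exact fun i hi => Finset.mem_biUnion.mpr ⟨t, htT, hi⟩
  have hsdiff : S \ Finset.Icc (s + 1 - k) s
      = (T.erase t).biUnion (fun t' => Finset.Ico t' (t' + k)) := by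
    ext i
    simp only [hSdef, Finset.mem_sdiff, Finset.mem_biUnion, Finset.mem_erase,
      Finset.mem_Ico, Finset.mem_Icc]
    constructor
    · rintro ⟨⟨t'', ht'', hi⟩, hiB⟩
      refine ⟨t'', ⟨fun he => ?_, ht''⟩, hi⟩
      subst he
      omega
    · rintro ⟨t', ⟨hne, ht'⟩, hi⟩
      have := hsep t' ht' hne
      exact ⟨⟨t', ht', hi⟩, by omega⟩
  refine ⟨hBsub, ?_, ?_⟩
  · rw [hsdiff]
    intro i hi
    obtain ⟨t', ht', hi'⟩ := Finset.mem_biUnion.mp hi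
    rw [Finset.mem_erase] at ht'
    have h1 := hsep t' ht'.2 ht'.1
    have h2 : i ∈ Finset.Icc r s := hblock t' ht'.2 hi'
    rw [Finset.mem_Icc] at h2 ⊢
    rw [Finset.mem_Ico] at hi'
    omega
  · exact ⟨T.erase t, fun a ha b hb hab =>
      hT a (Finset.mem_of_mem_erase ha) b (Finset.mem_of_mem_erase hb) hab, hsdiff⟩

lemma block_join {k r s : ℕ} (hk : 2 ≤ k) (h : r + k ≤ s) {S : Finset ℕ}
    (hS : S ⊆ Finset.Icc r (s - k)) (hB : IsBlockUnion k S) :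
    (S ∪ Finset.Icc (s + 1 - k) s ⊆ Finset.Icc r s) ∧
    IsBlockUnion k (S ∪ Finset.Icc (s + 1 - k) s) ∧
    Disjoint S (Finset.Icc (s + 1 - k) s) := by
  obtain ⟨T, hT, rfl⟩ := hB
  set S := T.biUnion (fun t => Finset.Ico t (t + k)) with hSdef
  have hmem : ∀ t' ∈ T, t' + k ≤ s + 1 - k := by
    intro t' ht'
    have h1 := hS (Finset.mem_biUnion.mpr ⟨t', ht', Finset.mem_Ico.mpr
      (⟨by omega, by omega⟩ : t' ≤ t' + k - 1 ∧ t' + k - 1 < t' + k)⟩)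
    rw [Finset.mem_Icc] at h1
    omega
  have hdisj : Disjoint S (Finset.Icc (s + 1 - k) s) := by
    rw [Finset.disjoint_left]
    intro i hi hi'
    have h1 := hS hi
    rw [Finset.mem_Icc] at h1 hi'
    omega
  have hBeq : Finset.Icc (s + 1 - k) s = Finset.Ico (s + 1 - k) (s + 1 - k + k) := by
    rw [show s + 1 - k + k = s + 1 by omega, Finset.Ico_add_one_right_eq_Icc]
  refine ⟨?_, ?_, hdisj⟩
  · apply Finset.union_subset
    · exact hS.trans (Finset.Icc_subset_Icc_right (by omega))
    · exact Finset.Icc_subset_Icc_left (by omega)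
  · refine ⟨insert (s + 1 - k) T, ?_, ?_⟩
    · intro a ha b hb hab
      rw [Finset.mem_insert] at ha hb
      rcases ha with rfl | ha
      · rcases hb with rfl | hb
        · exact absurd rfl hab
        · right
          have := hmem b hb
          omega
      · rcases hb with rfl | hb
        · left
          have := hmem a ha
          omega
        · exact hT a ha b hb hab
    · rw [Finset.biUnion_insert, ← hBeq, ← hSdef, Finset.union_comm]

open Classical in
lemma Qnat_rec {F : Type*} [Field F] {k r s : ℕ} (hk : 2 ≤ k) (h : r + k ≤ s)
    (x : ℕ → F) :
    Qnat k r s x = Qnat k r (s - 1) x -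
      (∏ i ∈ Finset.Icc (s + 1 - k) s, x i) * Qnat k r (s - k) x := by
  unfold Qnat
  rw [← Finset.sum_filter_add_sum_filter_not
    ((Finset.Icc r s).powerset.filter (fun S => IsBlockUnion k S)) (fun S => s ∈ S)]
  have hA0 : ((Finset.Icc r s).powerset.filter (fun S => IsBlockUnion k S)).filter
      (fun S => s ∉ S) = (Finset.Icc r (s - 1)).powerset.filter (fun S => IsBlockUnion k S) := by
    ext S
    simp only [Finset.mem_filter, Finset.mem_powerset]
    constructor
    · rintro ⟨⟨h1, h2⟩, h3⟩
      refine ⟨fun i hi => ?_, h2⟩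
      have hi1 := h1 hi
      rw [Finset.mem_Icc] at hi1 ⊢
      have : i ≠ s := fun he => h3 (he ▸ hi)
      omega
    · rintro ⟨h1, h2⟩
      refine ⟨⟨h1.trans (Finset.Icc_subset_Icc_right (by omega)), h2⟩, fun hs => ?_⟩
      have := h1 hs
      rw [Finset.mem_Icc] at this
      omega
  have hA1 : ∑ S ∈ ((Finset.Icc r s).powerset.filter (fun S => IsBlockUnion k S)).filter
      (fun S => s ∈ S), ((-1 : F) ^ (S.card / k) * ∏ i ∈ S, x i)
      = ∑ S' ∈ (Finset.Icc r (s - k)).powerset.filter (fun S => IsBlockUnion k S),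
        (-(∏ i ∈ Finset.Icc (s + 1 - k) s, x i) *
          ((-1 : F) ^ (S'.card / k) * ∏ i ∈ S', x i)) := by
    apply Finset.sum_nbij' (i := fun S => S \ Finset.Icc (s + 1 - k) s)
      (j := fun S' => S' ∪ Finset.Icc (s + 1 - k) s)
    · intro S hSmem
      simp only [Finset.mem_filter, Finset.mem_powerset] at hSmem ⊢
      obtain ⟨⟨h1, h2⟩, h3⟩ := hSmem
      obtain ⟨_, hb, hc⟩ := block_split hk h h1 h2 h3
      exact ⟨hb, hc⟩
    · intro S' hS'mem
      simp only [Finset.mem_filter, Finset.mem_powerset] at hS'mem ⊢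
      obtain ⟨h1, h2⟩ := hS'mem
      obtain ⟨ha, hb, _⟩ := block_join hk h h1 h2
      refine ⟨⟨ha, hb⟩, Finset.mem_union_right _ (Finset.mem_Icc.mpr ⟨by omega, le_refl s⟩)⟩
    · intro S hSmem
      simp only [Finset.mem_filter, Finset.mem_powerset] at hSmem
      obtain ⟨⟨h1, h2⟩, h3⟩ := hSmem
      obtain ⟨ha, _, _⟩ := block_split hk h h1 h2 h3
      exact Finset.sdiff_union_of_subset ha
    · intro S' hS'mem
      simp only [Finset.mem_filter, Finset.mem_powerset] at hS'mem
      obtain ⟨h1, h2⟩ := hS'mem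
      obtain ⟨_, _, hd⟩ := block_join hk h h1 h2
      rw [Finset.union_sdiff_distrib, Finset.sdiff_self, Finset.union_empty,
        Finset.sdiff_eq_self_of_disjoint hd]
    · intro S hSmem
      simp only [Finset.mem_filter, Finset.mem_powerset] at hSmem
      obtain ⟨⟨h1, h2⟩, h3⟩ := hSmem
      obtain ⟨ha, _, _⟩ := block_split hk h h1 h2 h3
      have hcardB : (Finset.Icc (s + 1 - k) s).card = k := by
        rw [Nat.card_Icc]; omega
      have hcard : S.card = (S \ Finset.Icc (s + 1 - k) s).card + k := by
        have := Finset.card_sdiff_add_card_eq_card ha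
        omega
      have hprod : ∏ i ∈ S, x i =
          (∏ i ∈ S \ Finset.Icc (s + 1 - k) s, x i) * ∏ i ∈ Finset.Icc (s + 1 - k) s, x i :=
        (Finset.prod_sdiff ha).symm
      rw [hprod, hcard, Nat.add_div_right _ (by omega : 0 < k), pow_succ]
      ring
  rw [hA0, hA1, ← Finset.mul_sum]
  ring

/-- For `k ≥ 2` and a primitive `2k`-th root of unity `ζ` (in any field containing
one), with all variables nonzero, the `k`-Catalan denominator polynomial satisfies
`Q_k(x_r, …, x_s) = ζ^{s-r+1} · x_r x_{r+1} ⋯ x_s ·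
K_{k, s-r+1}(1/(ζ x_r), 1/(ζ x_{r+1}), …, 1/(ζ x_s))`. -/
theorem stmt14 {F : Type*} [Field F] (k : ℕ) (hk : 2 ≤ k) (ζ : F)
    (hζ : IsPrimitiveRoot ζ (2 * k)) (x : ℕ → F) (hx : ∀ i, x i ≠ 0)
    (r s : ℕ) (hrs : r ≤ s) :
    Qnat k r s x =
      ζ ^ (s - r + 1) * (∏ i ∈ Finset.Icc r s, x i) *
        contK k (fun i => (ζ * x (r + i))⁻¹) (s - r + 1) := by
  have hζ0 : ζ ≠ 0 := by
    intro hcon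
    have := hζ.pow_eq_one
    rw [hcon, zero_pow (by omega : 2 * k ≠ 0)] at this
    exact zero_ne_one this
  have hζk : ζ ^ k = -1 :=
    (hζ.pow (by omega : 0 < 2 * k) (by ring : 2 * k = k * 2)).eq_neg_one_of_two_right
  have hIcc : ∀ a b : ℕ, a ≤ b + 1 → ∏ i ∈ Finset.Icc a b, x i
      = ∏ i ∈ Finset.range (b + 1 - a), x (a + i) := by
    intro a b hab
    rw [← Finset.Ico_add_one_right_eq_Icc, Finset.prod_Ico_eq_prod_range]
  induction s using Nat.strong_induction_on with
  | _ s ih =>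
  rcases lt_trichotomy (s + 1) (r + k) with h1 | h1 | h1
  · -- n < k
    rw [Qnat_of_lt (by omega) h1, contK_of_lt (by omega)]
    rw [hIcc r s (by omega), show s + 1 - r = s - r + 1 by omega]
    exact (prod_cancel ζ hζ0 x hx r (s - r + 1)).symm
  · -- n = k
    rw [Qnat_of_eq hk h1]
    have hn : s - r + 1 = k := by omega
    rw [hn, contK_of_ge (by omega) (le_refl k), Nat.sub_self,
      contK_of_lt (by omega : (0:ℕ) < k), contK_of_lt (by omega : k - 1 < k)]
    simp only [Finset.range_zero, Finset.prod_empty]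
    have hpr : (∏ i ∈ Finset.range (k - 1), (ζ * x (r + i))⁻¹) * (ζ * x (r + (k - 1)))⁻¹
        = ∏ i ∈ Finset.range k, (ζ * x (r + i))⁻¹ := by
      rw [show k = (k - 1) + 1 by omega, Finset.prod_range_succ,
        show (k - 1) + 1 - 1 = k - 1 by omega]
    rw [hpr]
    have hcancel := prod_cancel ζ hζ0 x hx r k
    have hx' : ∏ i ∈ Finset.Icc r s, x i = ∏ i ∈ Finset.range k, x (r + i) := by
      rw [hIcc r s (by omega), show s + 1 - r = k by omega]
    rw [hx', mul_add, mul_one]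
    have : ζ ^ k * (∏ i ∈ Finset.range k, x (r + i)) *
        ∏ i ∈ Finset.range k, (ζ * x (r + i))⁻¹ = 1 := hcancel
    rw [this, hζk]
    ring
  · -- n > k
    have hs1 : r ≤ s - 1 := by omega
    have hsk : r ≤ s - k := by omega
    have ih1 := ih (s - 1) (by omega) hs1
    have ih2 := ih (s - k) (by omega) hsk
    rw [Qnat_rec hk (by omega), ih1, ih2]
    have hn1 : s - 1 - r + 1 = s - r := by omega
    have hnk : s - k - r + 1 = s - r + 1 - k := by omega
    rw [hn1, hnk]
    rw [contK_of_ge (by omega : 0 < k) (by omega : k ≤ s - r + 1)]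
    have he1 : s - r + 1 - 1 = s - r := by omega
    rw [he1]
    rw [show r + (s - r) = s by omega]
    -- product splits
    have hsplit1 : ∏ i ∈ Finset.Icc r s, x i = (∏ i ∈ Finset.Icc r (s - 1), x i) * x s := by
      rw [show s = (s - 1) + 1 by omega, Finset.prod_Icc_succ_top (by omega)]
      rw [show (s - 1) + 1 = s by omega]
    have hsplit2 : ∏ i ∈ Finset.Icc r s, x i
        = (∏ i ∈ Finset.Icc r (s - k), x i) * ∏ i ∈ Finset.Icc (s + 1 - k) s, x i := by
      rw [← Finset.prod_union (by
        rw [Finset.disjoint_left]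
        intro i hi hi'
        rw [Finset.mem_Icc] at hi hi'
        omega)]
      congr 1
      ext i
      simp only [Finset.mem_union, Finset.mem_Icc]
      omega
    have hpow1 : (ζ : F) ^ (s - r + 1) = ζ ^ (s - r) * ζ := by rw [pow_succ]
    have hpow2 : (ζ : F) ^ (s - r + 1) = ζ ^ (s - r + 1 - k) * ζ ^ k := by
      rw [← pow_add]
      congr 1
      omega
    have hterm2 : ζ ^ (s - r + 1) * (∏ i ∈ Finset.Icc r s, x i) *
        (contK k (fun i => (ζ * x (r + i))⁻¹) (s - r) * (ζ * x s)⁻¹)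
        = ζ ^ (s - r) * (∏ i ∈ Finset.Icc r (s - 1), x i) *
          contK k (fun i => (ζ * x (r + i))⁻¹) (s - r) := by
      rw [hpow1, hsplit1]
      have hne : ζ * x s ≠ 0 := mul_ne_zero hζ0 (hx s)
      have hxs : x s ≠ 0 := hx s
      field_simp
    have hterm1 : ζ ^ (s - r + 1) * (∏ i ∈ Finset.Icc r s, x i) *
        contK k (fun i => (ζ * x (r + i))⁻¹) (s - r + 1 - k)
        = -((∏ i ∈ Finset.Icc (s + 1 - k) s, x i) *
          (ζ ^ (s - r + 1 - k) * (∏ i ∈ Finset.Icc r (s - k), x i) *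
            contK k (fun i => (ζ * x (r + i))⁻¹) (s - r + 1 - k))) := by
      rw [hpow2, hsplit2, hζk]
      ring
    calc ζ ^ (s - r) * (∏ i ∈ Finset.Icc r (s - 1), x i) *
          contK k (fun i => (ζ * x (r + i))⁻¹) (s - r) -
        (∏ i ∈ Finset.Icc (s + 1 - k) s, x i) *
          (ζ ^ (s - r + 1 - k) * (∏ i ∈ Finset.Icc r (s - k), x i) *
            contK k (fun i => (ζ * x (r + i))⁻¹) (s - r + 1 - k))
        = ζ ^ (s - r + 1) * (∏ i ∈ Finset.Icc r s, x i) *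
            contK k (fun i => (ζ * x (r + i))⁻¹) (s - r + 1 - k) +
          ζ ^ (s - r + 1) * (∏ i ∈ Finset.Icc r s, x i) *
            (contK k (fun i => (ζ * x (r + i))⁻¹) (s - r) * (ζ * x s)⁻¹) := by
          rw [hterm1, hterm2]; ring
      _ = ζ ^ (s - r + 1) * (∏ i ∈ Finset.Icc r s, x i) *
            (contK k (fun i => (ζ * x (r + i))⁻¹) (s - r + 1 - k) +
              contK k (fun i => (ζ * x (r + i))⁻¹) (s - r) * (ζ * x s)⁻¹) := by ring
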